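/- Let G be a finite graph and let G' be the graph obtained from G by adding, for each vertex v ∈ V(G), a new vertex v' adjacent exactly to v, and one further new vertex u adjacent exactly to all the new vertices v'. Then no vertex of V(G') \ V(G) lies in any wheel of G' (neither as a center nor as a rim vertex); every maximal wheel-free set of G' contains all vertices of V(G') \ V(G) and induces a connected subgraph of G'; and a set S ⊆ V(G) is a maximal wheel-free set of G if and only if S ∪ (V(G') \ V(G)) is a maximal wheel-free set of G'. -/

import Mathlib

/-- A wheel of `G` with center `c` and rim `C`: `C` is a set of neighbors of `c` inducing
a cycle on at least three vertices. -/
def IsWheel {V : Type} (G : SimpleGraph V) (c : V) (C : Set V) : Prop :=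
  C ⊆ G.neighborSet c ∧ ∃ n : ℕ, 3 ≤ n ∧ Nonempty (G.induce C ≃g SimpleGraph.cycleGraph n)

/-- `U` is wheel-free: the induced subgraph `G[U]` contains no wheel. -/
def WheelFreeSet {V : Type} (G : SimpleGraph V) (U : Set V) : Prop :=
  ¬ ∃ (c : V) (C : Set V), c ∈ U ∧ C ⊆ U ∧ IsWheel G c C

/-- `U` is a maximal wheel-free set. -/
def IsMaxWheelFreeSet {V : Type} (G : SimpleGraph V) (U : Set V) : Prop :=
  WheelFreeSet G U ∧ ∀ T : Set V, U ⊂ T → ¬ WheelFreeSet G T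

/-- The graph `G'` obtained from `G` by adding, for each vertex `v` (i.e. `Sum.inl v`),
a new pendant vertex `v' = Sum.inr (Sum.inl v)` adjacent exactly to `v`, and one further
new vertex `u = Sum.inr (Sum.inr ())` adjacent exactly to all the vertices `v'`. -/
def pendantExt {V : Type} (G : SimpleGraph V) : SimpleGraph (V ⊕ (V ⊕ Unit)) :=
  SimpleGraph.fromRel (fun a b =>
    (∃ x y, a = Sum.inl x ∧ b = Sum.inl y ∧ G.Adj x y) ∨
    (∃ x, a = Sum.inl x ∧ b = Sum.inr (Sum.inl x)) ∨
    (∃ x, a = Sum.inr (Sum.inl x) ∧ b = Sum.inr (Sum.inr ())))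


section Helpers

variable {V : Type} {G : SimpleGraph V}

lemma pe_adj_inl_inl {x y : V} : (pendantExt G).Adj (Sum.inl x) (Sum.inl y) ↔ G.Adj x y := by
  simp only [pendantExt, SimpleGraph.fromRel_adj]
  constructor
  · rintro ⟨h, (⟨a,b,ha,hb,hab⟩|⟨a,ha,hb⟩|⟨a,ha,hb⟩)|(⟨a,b,ha,hb,hab⟩|⟨a,ha,hb⟩|⟨a,ha,hb⟩)⟩ <;>
      simp_all
    exact hab.symm
  · intro h; exact ⟨by simp [h.ne], Or.inl (Or.inl ⟨x, y, rfl, rfl, h⟩)⟩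

lemma pe_adj_inl_inr {x : V} {w : V ⊕ Unit} :
    (pendantExt G).Adj (Sum.inl x) (Sum.inr w) ↔ w = Sum.inl x := by
  simp only [pendantExt, SimpleGraph.fromRel_adj]
  constructor
  · rintro ⟨h, (⟨a,b,ha,hb,hab⟩|⟨a,ha,hb⟩|⟨a,ha,hb⟩)|(⟨a,b,ha,hb,hab⟩|⟨a,ha,hb⟩|⟨a,ha,hb⟩)⟩ <;>
      simp_all
  · rintro rfl; exact ⟨by simp, Or.inl (Or.inr (Or.inl ⟨x, rfl, rfl⟩))⟩

lemma pe_adj_inr_inr {w w' : V ⊕ Unit} :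
    (pendantExt G).Adj (Sum.inr w) (Sum.inr w') ↔
      ((∃ x, w = Sum.inl x) ∧ w' = Sum.inr ()) ∨ ((∃ x, w' = Sum.inl x) ∧ w = Sum.inr ()) := by
  simp only [pendantExt, SimpleGraph.fromRel_adj]
  constructor
  · rintro ⟨h, (⟨a,b,ha,hb,hab⟩|⟨a,ha,hb⟩|⟨a,ha,hb⟩)|(⟨a,b,ha,hb,hab⟩|⟨a,ha,hb⟩|⟨a,ha,hb⟩)⟩ <;>
      simp_all
  · rintro (⟨⟨x, rfl⟩, rfl⟩|⟨⟨x, rfl⟩, rfl⟩)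
    · exact ⟨by simp, Or.inl (Or.inr (Or.inr ⟨x, rfl, rfl⟩))⟩
    · exact ⟨by simp, Or.inr (Or.inr (Or.inr ⟨x, rfl, rfl⟩))⟩

lemma exists_edge_of_wheel {c : V} {C : Set V} (h : IsWheel G c C) :
    ∃ a b, a ∈ C ∧ b ∈ C ∧ G.Adj a b := by
  obtain ⟨-, n, hn, ⟨e⟩⟩ := h
  obtain ⟨m, rfl⟩ : ∃ m, n = m + 3 := ⟨n - 3, by omega⟩
  have hadj : (SimpleGraph.cycleGraph (m + 3)).Adj 0 1 := by
    show (SimpleGraph.cycleGraph ((m+1) + 2)).Adj 0 1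
    rw [SimpleGraph.cycleGraph_adj]
    right; simp
  have : (G.induce C).Adj (e.symm 0) (e.symm 1) := e.symm.map_rel_iff.mpr hadj
  simp only [SimpleGraph.induce, SimpleGraph.comap_adj, Function.Embedding.coe_subtype] at this
  exact ⟨(e.symm 0).1, (e.symm 1).1, (e.symm 0).2, (e.symm 1).2, this⟩

lemma three_distinct_of_wheel {c : V} {C : Set V} (h : IsWheel G c C) :
    ∃ a b d, a ∈ C ∧ b ∈ C ∧ d ∈ C ∧ a ≠ b ∧ a ≠ d ∧ b ≠ d := by
  obtain ⟨-, n, hn, ⟨e⟩⟩ := h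
  obtain ⟨m, rfl⟩ : ∃ m, n = m + 3 := ⟨n - 3, by omega⟩
  refine ⟨(e.symm 0).1, (e.symm 1).1, (e.symm 2).1, (e.symm 0).2, (e.symm 1).2, (e.symm 2).2,
    ?_, ?_, ?_⟩ <;>
  · intro hh
    have := e.symm.injective (Subtype.ext hh)
    simp [Fin.ext_iff, Nat.mod_eq_of_lt (show 2 < m + 3 by omega)] at this

/-- The induced subgraph on `Sum.inl '' C` in `pendantExt G` is isomorphic to `G[C]`. -/
noncomputable def isoInduceInl (C : Set V) :
    G.induce C ≃g (pendantExt G).induce (Sum.inl '' C) where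
  toEquiv := Equiv.Set.image Sum.inl C Sum.inl_injective
  map_rel_iff' := by
    rintro ⟨a, ha⟩ ⟨b, hb⟩
    simp [Equiv.Set.image, Equiv.Set.imageOfInjOn, SimpleGraph.induce, SimpleGraph.comap_adj,
      pe_adj_inl_inl]

lemma exists_nbr_of_wheel {c : V} {C : Set V} (h : IsWheel G c C) {w : V} (hw : w ∈ C) :
    ∃ a ∈ C, G.Adj w a := by
  obtain ⟨-, n, hn, ⟨e⟩⟩ := h
  obtain ⟨m, rfl⟩ : ∃ m, n = m + 3 := ⟨n - 3, by omega⟩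
  set i : Fin (m + 3) := e ⟨w, hw⟩ with hi
  have hadj : (SimpleGraph.cycleGraph (m + 3)).Adj i (i + 1) := by
    show (SimpleGraph.cycleGraph ((m+1) + 2)).Adj i (i + 1)
    rw [SimpleGraph.cycleGraph_adj]
    right; simp
  have h2 : (SimpleGraph.cycleGraph (m+3)).Adj (e ⟨w, hw⟩) (e (e.symm (i + 1))) := by
    rwa [e.apply_symm_apply]
  have h3 : (G.induce C).Adj ⟨w, hw⟩ (e.symm (i + 1)) := e.map_rel_iff.mp h2
  simp only [SimpleGraph.induce, SimpleGraph.comap_adj, Function.Embedding.coe_subtype] at h3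
  exact ⟨(e.symm (i + 1)).1, (e.symm (i + 1)).2, h3⟩

lemma not_center_mem_rim {c : V} {C : Set V} (h : IsWheel G c C) : c ∉ C := by
  intro hc
  exact G.irrefl (h.1 hc)

/-- Any wheel of `pendantExt G` lives entirely in the `inl` copy of `G`. -/
lemma wheel_inl {c : V ⊕ (V ⊕ Unit)} {C : Set (V ⊕ (V ⊕ Unit))}
    (h : IsWheel (pendantExt G) c C) :
    (∃ c₀, c = Sum.inl c₀) ∧ C ⊆ Set.range Sum.inl := by
  have hsub := h.1
  match c with
  | Sum.inr (Sum.inl x) =>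
    exfalso
    obtain ⟨a, b, d, ha, hb, hd, hab, had, hbd⟩ := three_distinct_of_wheel h
    have key : ∀ z ∈ C, z = Sum.inl x ∨ z = Sum.inr (Sum.inr ()) := by
      intro z hz
      have hadj : (pendantExt G).Adj (Sum.inr (Sum.inl x)) z := hsub hz
      match z with
      | Sum.inl y =>
        have := (pe_adj_inl_inr.mp hadj.symm)
        left; simp_all
      | Sum.inr w' =>
        rcases pe_adj_inr_inr.mp hadj with ⟨-, rfl⟩ | ⟨-, hfalse⟩
        · right; rfl
        · exact absurd hfalse (by simp)
    rcases key a ha with rfl | rfl <;> rcases key b hb with rfl | rfl <;>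
      rcases key d hd with rfl | rfl <;> simp_all
  | Sum.inr (Sum.inr ()) =>
    exfalso
    obtain ⟨a, b, ha, hb, hab⟩ := exists_edge_of_wheel h
    have key : ∀ z ∈ C, ∃ y, z = Sum.inr (Sum.inl y) := by
      intro z hz
      have hadj : (pendantExt G).Adj (Sum.inr (Sum.inr ())) z := hsub hz
      match z with
      | Sum.inl y => exact absurd (pe_adj_inl_inr.mp hadj.symm) (by simp)
      | Sum.inr w' =>
        rcases pe_adj_inr_inr.mp hadj with ⟨⟨y, hy⟩, -⟩ | ⟨⟨y, hy⟩, -⟩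
        · exact absurd hy (by simp)
        · exact ⟨y, by rw [hy]⟩
    obtain ⟨ya, rfl⟩ := key a ha
    obtain ⟨yb, rfl⟩ := key b hb
    rcases pe_adj_inr_inr.mp hab with ⟨-, hfalse⟩ | ⟨-, hfalse⟩ <;> simp_all
  | Sum.inl c₀ =>
    refine ⟨⟨c₀, rfl⟩, ?_⟩
    intro w hw
    have hadj : (pendantExt G).Adj (Sum.inl c₀) w := hsub hw
    match w with
    | Sum.inl y => exact ⟨y, rfl⟩
    | Sum.inr w' =>
      exfalso
      have hw' : w' = Sum.inl c₀ := pe_adj_inl_inr.mp hadj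
      subst hw'
      obtain ⟨a, haC, haadj⟩ := exists_nbr_of_wheel h hw
      have hcC : (Sum.inl c₀ : V ⊕ (V ⊕ Unit)) ∉ C := not_center_mem_rim h
      match a with
      | Sum.inl y =>
        have : c₀ = y := by simpa using pe_adj_inl_inr.mp haadj.symm
        exact hcC (this ▸ haC)
      | Sum.inr w'' =>
        rcases pe_adj_inr_inr.mp haadj with ⟨-, rfl⟩ | ⟨⟨y, hy⟩, hfalse⟩
        · have := hsub haC
          exact absurd (pe_adj_inl_inr.mp this) (by simp)
        · simp_all

lemma isWheel_image_iff {c : V} {C : Set V} :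
    IsWheel (pendantExt G) (Sum.inl c) (Sum.inl '' C) ↔ IsWheel G c C := by
  constructor
  · rintro ⟨hsub, n, hn, ⟨e⟩⟩
    refine ⟨?_, n, hn, ⟨(isoInduceInl C).trans e⟩⟩
    intro w hw
    have := hsub (Set.mem_image_of_mem Sum.inl hw)
    exact pe_adj_inl_inl.mp this
  · rintro ⟨hsub, n, hn, ⟨e⟩⟩
    refine ⟨?_, n, hn, ⟨(isoInduceInl C).symm.trans e⟩⟩
    rintro w ⟨x, hx, rfl⟩
    exact pe_adj_inl_inl.mpr (hsub hx)

lemma wheelFree_transfer {S : Set V} :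
    WheelFreeSet G S ↔
      WheelFreeSet (pendantExt G) (Sum.inl '' S ∪ Set.range Sum.inr) := by
  constructor
  · rintro hS ⟨c', C', hc', hC', hw⟩
    obtain ⟨⟨c, rfl⟩, hrange⟩ := wheel_inl hw
    have hcS : c ∈ S := by
      rcases hc' with ⟨x, hx, hxe⟩ | ⟨x, hx⟩
      · exact Sum.inl_injective hxe ▸ hx
      · simp at hx
    have hCim : Sum.inl '' (Sum.inl ⁻¹' C') = C' := Set.image_preimage_eq_of_subset hrange
    have hCS : Sum.inl ⁻¹' C' ⊆ S := by
      intro x hx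
      rcases hC' hx with ⟨y, hy, hye⟩ | ⟨y, hy⟩
      · exact Sum.inl_injective hye ▸ hy
      · simp at hy
    exact hS ⟨c, Sum.inl ⁻¹' C', hcS, hCS, isWheel_image_iff.mp (by rwa [hCim])⟩
  · rintro hS ⟨c, C, hc, hC, hw⟩
    exact hS ⟨Sum.inl c, Sum.inl '' C, Or.inl (Set.mem_image_of_mem _ hc),
      fun w ⟨x, hx, hxe⟩ => Or.inl ⟨x, hC hx, hxe⟩, isWheel_image_iff.mpr hw⟩

end Helpers

/-- Let `G` be a finite graph and `G'` the graph `pendantExt G`.  The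
new vertices (`Set.range Sum.inr`) lie in no wheel of `G'`, neither as centers nor as rim
vertices; every maximal wheel-free set of `G'` contains all new vertices and induces a
connected subgraph of `G'`; and `S ⊆ V(G)` is a maximal wheel-free set of `G` if and
only if `S` together with all the new vertices is a maximal wheel-free set of `G'`. -/
theorem wheelFree_connected_reduction
    {V : Type} [Fintype V] (G : SimpleGraph V) :
    (∀ w ∈ Set.range (Sum.inr : V ⊕ Unit → V ⊕ (V ⊕ Unit)),
      (¬ ∃ C : Set (V ⊕ (V ⊕ Unit)), IsWheel (pendantExt G) w C) ∧
      (¬ ∃ (c : V ⊕ (V ⊕ Unit)) (C : Set (V ⊕ (V ⊕ Unit))),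
          IsWheel (pendantExt G) c C ∧ w ∈ C)) ∧
    (∀ S : Set (V ⊕ (V ⊕ Unit)), IsMaxWheelFreeSet (pendantExt G) S →
      Set.range (Sum.inr : V ⊕ Unit → V ⊕ (V ⊕ Unit)) ⊆ S ∧
      ((pendantExt G).induce S).Connected) ∧
    (∀ S : Set V, IsMaxWheelFreeSet G S ↔
      IsMaxWheelFreeSet (pendantExt G)
        (Sum.inl '' S ∪ Set.range (Sum.inr : V ⊕ Unit → V ⊕ (V ⊕ Unit)))) := by
  classical
  have noNewWheel : ∀ w ∈ Set.range (Sum.inr : V ⊕ Unit → V ⊕ (V ⊕ Unit)),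
      (¬ ∃ C : Set (V ⊕ (V ⊕ Unit)), IsWheel (pendantExt G) w C) ∧
      (¬ ∃ (c : V ⊕ (V ⊕ Unit)) (C : Set (V ⊕ (V ⊕ Unit))),
          IsWheel (pendantExt G) c C ∧ w ∈ C) := by
    rintro w ⟨x, rfl⟩
    constructor
    · rintro ⟨C, hw⟩
      obtain ⟨⟨c₀, hc⟩, -⟩ := wheel_inl hw
      simp at hc
    · rintro ⟨c, C, hw, hmem⟩
      obtain ⟨-, hrange⟩ := wheel_inl hw
      obtain ⟨y, hy⟩ := hrange hmem
      simp at hy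
  have maxContains : ∀ S : Set (V ⊕ (V ⊕ Unit)), IsMaxWheelFreeSet (pendantExt G) S →
      Set.range (Sum.inr : V ⊕ Unit → V ⊕ (V ⊕ Unit)) ⊆ S := by
    rintro S ⟨hwf, hmax⟩ w ⟨x, rfl⟩
    by_contra hnot
    refine hmax (insert (Sum.inr x) S) (Set.ssubset_insert hnot) ?_
    rintro ⟨c, C, hc, hC, hw⟩
    obtain ⟨⟨c₀, rfl⟩, hrange⟩ := wheel_inl hw
    have hcS : Sum.inl c₀ ∈ S := by
      rcases hc with hc | hc
      · simp at hc
      · exact hc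
    have hCS : C ⊆ S := by
      intro z hz
      rcases hC hz with hz' | hz'
      · obtain ⟨y, hy⟩ := hrange hz
        rw [hz'] at hy; simp at hy
      · exact hz'
    exact hwf ⟨Sum.inl c₀, C, hcS, hCS, hw⟩
  refine ⟨noNewWheel, ?_, ?_⟩
  · -- maximal wheel-free sets contain all new vertices and are connected
    intro S hS
    have hsub := maxContains S hS
    refine ⟨hsub, ?_⟩
    have hu : (Sum.inr (Sum.inr ()) : V ⊕ (V ⊕ Unit)) ∈ S := hsub ⟨Sum.inr (), rfl⟩
    have reach : ∀ a (ha : a ∈ S),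
        ((pendantExt G).induce S).Reachable ⟨a, ha⟩ ⟨Sum.inr (Sum.inr ()), hu⟩ := by
      intro a ha
      match a with
      | Sum.inl v =>
        have hv' : (Sum.inr (Sum.inl v) : V ⊕ (V ⊕ Unit)) ∈ S := hsub ⟨Sum.inl v, rfl⟩
        have h1 : ((pendantExt G).induce S).Adj ⟨Sum.inl v, ha⟩ ⟨Sum.inr (Sum.inl v), hv'⟩ := by
          simp only [SimpleGraph.induce, SimpleGraph.comap_adj, Function.Embedding.coe_subtype]
          exact pe_adj_inl_inr.mpr rfl
        have h2 : ((pendantExt G).induce S).Adj ⟨Sum.inr (Sum.inl v), hv'⟩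
            ⟨Sum.inr (Sum.inr ()), hu⟩ := by
          simp only [SimpleGraph.induce, SimpleGraph.comap_adj, Function.Embedding.coe_subtype]
          exact pe_adj_inr_inr.mpr (Or.inl ⟨⟨v, rfl⟩, rfl⟩)
        exact h1.reachable.trans h2.reachable
      | Sum.inr (Sum.inl v) =>
        have h2 : ((pendantExt G).induce S).Adj ⟨Sum.inr (Sum.inl v), ha⟩
            ⟨Sum.inr (Sum.inr ()), hu⟩ := by
          simp only [SimpleGraph.induce, SimpleGraph.comap_adj, Function.Embedding.coe_subtype]
          exact pe_adj_inr_inr.mpr (Or.inl ⟨⟨v, rfl⟩, rfl⟩)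
        exact h2.reachable
      | Sum.inr (Sum.inr ()) => exact SimpleGraph.Reachable.refl _
    haveI : Nonempty ((pendantExt G).induce S).support.Elem ∨ True := Or.inr trivial
    haveI : Nonempty {x // x ∈ S} := ⟨⟨Sum.inr (Sum.inr ()), hu⟩⟩
    exact SimpleGraph.Connected.mk (fun a b => (reach a.1 a.2).trans (reach b.1 b.2).symm)
  · -- the correspondence of maximal wheel-free sets
    intro S
    constructor
    · rintro ⟨hwf, hmax⟩
      refine ⟨wheelFree_transfer.mp hwf, ?_⟩
      rintro T' ⟨hsubT, hneT⟩ hwfT'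
      obtain ⟨a, haT', haT⟩ := Set.exists_of_ssubset ⟨hsubT, hneT⟩
      match a with
      | Sum.inr x => exact haT (Or.inr ⟨x, rfl⟩)
      | Sum.inl w =>
        have hwS : w ∉ S := fun hwS => haT (Or.inl ⟨w, hwS, rfl⟩)
        have := hmax (insert w S) (Set.ssubset_insert hwS)
        obtain ⟨c, C, hc, hC, hw⟩ := not_not.mp this
        refine hwfT' ⟨Sum.inl c, Sum.inl '' C, ?_, ?_, isWheel_image_iff.mpr hw⟩
        · rcases hc with rfl | hc
          · exact haT'
          · exact hsubT (Or.inl ⟨c, hc, rfl⟩)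
        · rintro z ⟨y, hy, rfl⟩
          rcases hC hy with rfl | hyS
          · exact haT'
          · exact hsubT (Or.inl ⟨y, hyS, rfl⟩)
    · rintro ⟨hwf, hmax⟩
      refine ⟨wheelFree_transfer.mpr hwf, ?_⟩
      intro S' hss hwfS'
      obtain ⟨w, hwS', hwS⟩ := Set.exists_of_ssubset hss
      have hproper : (Sum.inl '' S ∪ Set.range Sum.inr : Set (V ⊕ (V ⊕ Unit)))
          ⊂ Sum.inl '' S' ∪ Set.range Sum.inr := by
        constructor
        · apply Set.union_subset_union_left
          exact Set.image_mono hss.1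
        · intro hsub'
          have : (Sum.inl w : V ⊕ (V ⊕ Unit)) ∈ Sum.inl '' S ∪ Set.range Sum.inr :=
            hsub' (Or.inl ⟨w, hwS', rfl⟩)
          rcases this with ⟨y, hy, hye⟩ | ⟨y, hy⟩
          · exact hwS (Sum.inl_injective hye ▸ hy)
          · simp at hy
      exact hmax _ hproper (wheelFree_transfer.mp hwfS')
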